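/- Let W : ℕ → ℝ be nondecreasing with W(1) = 1, and suppose there exist p ∈ (0,1) and δ ∈ (0,1) such that for every n ≥ 2, W(n) ≤ 1 + W(a) + W(b) for some nonnegative integers a, b < n with a^p + b^p ≤ (1-δ) n^p. Then there exists a constant c > 0 such that W(n) ≤ c n^p for all n ≥ 1. -/
import Mathlib


theorem width_recurrence_solution (W : ℕ → ℝ) (hmono : Monotone W) (hW1 : W 1 = 1)
    (p δ : ℝ) (hp : 0 < p) (hp1 : p < 1) (hδ0 : 0 < δ) (hδ1 : δ < 1)
    (hrec : ∀ n : ℕ, 2 ≤ n → ∃ a b : ℕ, a < n ∧ b < n ∧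
      (a : ℝ) ^ p + (b : ℝ) ^ p ≤ (1 - δ) * (n : ℝ) ^ p ∧ W n ≤ 1 + W a + W b) :
    ∃ c : ℝ, 0 < c ∧ ∀ n : ℕ, 1 ≤ n → W n ≤ c * (n : ℝ) ^ p := by
  obtain ⟨c, hc⟩ : ∃ c : ℝ, c = 3 / δ + 1 := ⟨_, rfl⟩
  have hc1 : 1 ≤ c := by
    have : 0 < 3 / δ := by positivity
    linarith
  have hcδ : 3 ≤ c * δ := by
    have h3 : (3 / δ) * δ = 3 := by field_simp
    nlinarith
  refine ⟨c, by linarith, ?_⟩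
  intro n
  induction n using Nat.strong_induction_on with
  | _ n ih =>
    intro hn1
    rcases eq_or_lt_of_le hn1 with h1 | h2
    · simp [← h1, hW1, Real.one_rpow]
      linarith
    · obtain ⟨a, b, ha, hb, habn, hWn⟩ := hrec n h2
      have hbound : ∀ m : ℕ, m < n → W m ≤ c * (m : ℝ) ^ p + 1 := by
        intro m hm
        rcases Nat.eq_zero_or_pos m with rfl | hm1
        · have : W 0 ≤ W 1 := hmono (by norm_num)
          simp [Real.zero_rpow (ne_of_gt hp)]
          linarith
        · have := ih m hm hm1
          linarith
      have hWa := hbound a ha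
      have hWb := hbound b hb
      have hnp : (1 : ℝ) ≤ (n : ℝ) ^ p := by
        rw [show (1 : ℝ) = (1 : ℝ) ^ p by rw [Real.one_rpow]]
        exact Real.rpow_le_rpow (by norm_num) (by exact_mod_cast hn1) (le_of_lt hp)
      have hcab : c * ((a : ℝ) ^ p + (b : ℝ) ^ p) ≤ c * ((1 - δ) * (n : ℝ) ^ p) :=
        mul_le_mul_of_nonneg_left habn (by linarith)
      nlinarith [mul_le_mul_of_nonneg_left hnp (le_of_lt (mul_pos (show (0:ℝ) < c by linarith) hδ0))]
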